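/- Let I be a proper ideal of R. Then I, regarded as a submodule of the R-module R, is a weakly classical 1-absorbing prime submodule of R if and only if I is a weakly 1-absorbing prime ideal of R. -/
import Mathlib


/-- A proper submodule `N` of `M` is weakly classical 1-absorbing prime if whenever
`abcm ∈ N` and `abcm ≠ 0` for nonunits `a, b, c ∈ R` and `m ∈ M`, then `abm ∈ N` or `cm ∈ N`. -/
def IsWeaklyClassical1AbsorbingPrime {R : Type*} [CommRing R] {M : Type*} [AddCommGroup M]
    [Module R M] (N : Submodule R M) : Prop :=
  N ≠ ⊤ ∧ ∀ a b c : R, ∀ m : M, ¬ IsUnit a → ¬ IsUnit b → ¬ IsUnit c →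
    (a * b * c) • m ∈ N → (a * b * c) • m ≠ 0 → ((a * b) • m ∈ N ∨ c • m ∈ N)

/-- A proper ideal `I` of `R` is weakly 1-absorbing prime if whenever `abc ∈ I` and
`abc ≠ 0` for nonunits `a, b, c ∈ R`, then `ab ∈ I` or `c ∈ I`. -/
def IsWeakly1AbsorbingPrimeIdeal {R : Type*} [CommRing R] (I : Ideal R) : Prop :=
  I ≠ ⊤ ∧ ∀ a b c : R, ¬ IsUnit a → ¬ IsUnit b → ¬ IsUnit c →
    a * b * c ∈ I → a * b * c ≠ 0 → (a * b ∈ I ∨ c ∈ I)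

/-- A proper ideal `I` of `R` is a weakly classical 1-absorbing prime
submodule of the `R`-module `R` iff `I` is a weakly 1-absorbing prime ideal of `R`. -/
theorem stmt_2 {R : Type*} [CommRing R] [Nontrivial R] (I : Ideal R) (hI : I ≠ ⊤) :
    IsWeaklyClassical1AbsorbingPrime (I : Submodule R R) ↔ IsWeakly1AbsorbingPrimeIdeal I := by
  constructor
  · rintro ⟨h1, h2⟩
    refine ⟨hI, fun a b c ha hb hc habc hne => ?_⟩
    have := h2 a b c 1 ha hb hc (by simpa using habc) (by simpa using hne)
    simpa using this
  · rintro ⟨h1, h2⟩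
    refine ⟨hI, fun a b c m ha hb hc habc hne => ?_⟩
    have hcm : ¬ IsUnit (c * m) := fun h => hc (isUnit_of_mul_isUnit_left h)
    have hmem : a * b * (c * m) ∈ I := by
      have : (a * b * c) • m = a * b * (c * m) := by rw [smul_eq_mul]; ring
      rwa [this] at habc
    have hne' : a * b * (c * m) ≠ 0 := by
      intro h; apply hne; show a * b * c * m = 0; rw [← h]; ring
    rcases h2 a b (c * m) ha hb hcm hmem hne' with h | h
    · left
      show a * b * m ∈ I
      exact I.mul_mem_right m h
    · right
      exact h
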